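/- arXiv:1406.6902 — 3 statements merged into one kernel-verified Lean document; each statement's English description precedes it below -/
import Mathlib

section
/- Let (Ω1, ℱ, P1) and (Ω2, 𝒢, P2) be probability spaces, let ℱ' ⊆ ℱ and 𝒢' ⊆ 𝒢 be sub-σ-algebras, and let Z1 ∈ L¹(Ω1, ℱ, P1), Z2 ∈ L¹(Ω2, 𝒢, P2). Then the random variable (ω1, ω2) ↦ Z1(ω1)·Z2(ω2) is integrable on the product space (Ω1 × Ω2, ℱ ⊗ 𝒢, P1 × P2), and (P1 × P2)-almost everywhere one has E[(ω1,ω2) ↦ Z1(ω1)Z2(ω2) | ℱ' ⊗ 𝒢'](ω1, ω2) = E[Z1 | ℱ'](ω1) · E[Z2 | 𝒢'](ω2). -/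
open MeasureTheory

/-- Factorization of conditional expectations on a product probability space:
if `Z1 ∈ L¹(P1)` and `Z2 ∈ L¹(P2)`, then `(ω1, ω2) ↦ Z1 ω1 * Z2 ω2` is integrable on the
product space and its conditional expectation given the product sub-σ-algebra `F' ⊗ G'`
is the product of the conditional expectations. -/
theorem stmt_0 {Ω1 Ω2 : Type*} (F' : MeasurableSpace Ω1) (G' : MeasurableSpace Ω2)
    [m1 : MeasurableSpace Ω1] [m2 : MeasurableSpace Ω2]
    (μ1 : Measure Ω1) (μ2 : Measure Ω2)
    [IsProbabilityMeasure μ1] [IsProbabilityMeasure μ2]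
    (hF' : F' ≤ m1) (hG' : G' ≤ m2)
    (Z1 : Ω1 → ℝ) (Z2 : Ω2 → ℝ)
    (hZ1 : Integrable Z1 μ1) (hZ2 : Integrable Z2 μ2) :
    Integrable (fun p : Ω1 × Ω2 => Z1 p.1 * Z2 p.2) (μ1.prod μ2) ∧
      (μ1.prod μ2)[(fun p : Ω1 × Ω2 => Z1 p.1 * Z2 p.2) | F'.prod G']
        =ᵐ[μ1.prod μ2] fun p : Ω1 × Ω2 => ((μ1[Z1|F']) p.1) * ((μ2[Z2|G']) p.2) := by
  have hint : Integrable (fun p : Ω1 × Ω2 => Z1 p.1 * Z2 p.2) (μ1.prod μ2) :=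
    hZ1.mul_prod hZ2
  refine ⟨hint, ?_⟩
  set g1 : Ω1 → ℝ := μ1[Z1|F'] with hg1
  set g2 : Ω2 → ℝ := μ2[Z2|G'] with hg2
  have hg1i : Integrable g1 μ1 := integrable_condExp
  have hg2i : Integrable g2 μ2 := integrable_condExp
  have hgint : Integrable (fun p : Ω1 × Ω2 => g1 p.1 * g2 p.2) (μ1.prod μ2) :=
    hg1i.mul_prod hg2i
  have hle : F'.prod G' ≤ (Prod.instMeasurableSpace : MeasurableSpace (Ω1 × Ω2)) :=
    sup_le_sup (MeasurableSpace.comap_mono hF') (MeasurableSpace.comap_mono hG')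
  haveI : SigmaFinite ((μ1.prod μ2).trim hle) := by infer_instance
  -- strong measurability of the product of conditional expectations
  have hgm : AEStronglyMeasurable[F'.prod G']
      (fun p : Ω1 × Ω2 => g1 p.1 * g2 p.2) (μ1.prod μ2) := by
    refine StronglyMeasurable.aestronglyMeasurable ?_
    have h1 : StronglyMeasurable[F'.prod G'] (fun p : Ω1 × Ω2 => g1 p.1) :=
      (stronglyMeasurable_condExp (m := F')).comp_measurable
        (@measurable_fst _ _ F' G')
    have h2 : StronglyMeasurable[F'.prod G'] (fun p : Ω1 × Ω2 => g2 p.2) :=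
      (stronglyMeasurable_condExp (m := G')).comp_measurable
        (@measurable_snd _ _ F' G')
    exact h1.mul h2
  -- agreement of set integrals on the product sub-σ-algebra
  have hg_eq : ∀ s : Set (Ω1 × Ω2), MeasurableSet[F'.prod G'] s →
      ∫ p in s, g1 p.1 * g2 p.2 ∂(μ1.prod μ2) = ∫ p in s, Z1 p.1 * Z2 p.2 ∂(μ1.prod μ2) := by
    have hgen : (F'.prod G' : MeasurableSpace (Ω1 × Ω2)) =
        MeasurableSpace.generateFrom
          (Set.image2 (· ×ˢ ·) { s : Set Ω1 | MeasurableSet[F'] s }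
            { t : Set Ω2 | MeasurableSet[G'] t }) :=
      (@generateFrom_prod Ω1 Ω2 F' G').symm
    refine @MeasurableSpace.induction_on_inter (Ω1 × Ω2) (F'.prod G')
      (fun s _ => ∫ p in s, g1 p.1 * g2 p.2 ∂(μ1.prod μ2)
        = ∫ p in s, Z1 p.1 * Z2 p.2 ∂(μ1.prod μ2)) _ hgen
      (@isPiSystem_prod Ω1 Ω2 F' G') ?_ ?_ ?_ ?_
    · simp
    · rintro t ⟨A, hA, B, hB, rfl⟩
      rw [setIntegral_prod_mul, setIntegral_prod_mul,
        setIntegral_condExp hF' hZ1 hA, setIntegral_condExp hG' hZ2 hB]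
    · intro t ht ih
      have ht' : MeasurableSet t := hle _ ht
      have e1 := integral_add_compl ht' hgint
      have e2 := integral_add_compl ht' hint
      have etot : ∫ p, g1 p.1 * g2 p.2 ∂(μ1.prod μ2)
          = ∫ p, Z1 p.1 * Z2 p.2 ∂(μ1.prod μ2) := by
        rw [integral_prod_mul, integral_prod_mul, hg1, hg2,
          integral_condExp hF', integral_condExp hG']
      linarith [e1, e2, ih, etot]
    · intro f hdisj hmeas ih
      have hm' : ∀ i, MeasurableSet (f i) := fun i => hle _ (hmeas i)
      rw [integral_iUnion hm' hdisj hgint.integrableOn,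
        integral_iUnion hm' hdisj hint.integrableOn]
      exact tsum_congr ih
  exact (ae_eq_condExp_of_forall_setIntegral_eq hle hint
    (fun s _ _ => hgint.integrableOn) (fun s hs _ => hg_eq s hs) hgm).symm
end

section
/- For every i ∈ {1, …, l_a} and every 0 ≤ t ≤ T, one has P-almost surely E[1_{T_i > T} | 𝒢^X_∞ ⊔ 𝒢^{R^i}_t] = 1_{T_i > t} · exp(−∫_t^T λ(s, X_s) ds), where 𝒢^X_∞ ⊔ 𝒢^{R^i}_t denotes the σ-algebra generated by 𝒢^X_∞ together with 𝒢^{R^i}_t. -/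
open MeasureTheory Set

/-- For doubly-stochastic lifetimes, for each `i` and `0 ≤ t ≤ T`,
`E[1_{τ i > T} | 𝒢^X_∞ ⊔ 𝒢^{R^i}_t] = 1_{τ i > t} exp(-∫_t^T λ(s, X_s) ds)` a.s.,
where `𝒢^{R^i}_t` is generated by the single-life death-indicator process up to time `t`. -/
theorem stmt_3 {Ω : Type*} (GX : MeasurableSpace Ω) (GRi : ℝ → MeasurableSpace Ω)
    [m0 : MeasurableSpace Ω] (μ : Measure Ω) [IsProbabilityMeasure μ]
    (X : ℝ → Ω → ℝ) (hX : Measurable (Function.uncurry X))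
    (lam : ℝ → ℝ → ℝ) (hlam : Measurable (Function.uncurry lam))
    (hlam_pos : ∀ t x, 0 < lam t x)
    (hlam_int : ∀ Tstar : ℝ, 0 < Tstar →
      Integrable (fun ω => ∫ u in Ioc (0:ℝ) Tstar, lam u (X u ω)) μ)
    (la : ℕ) (hla : 1 ≤ la)
    (τ : Fin la → Ω → ℝ) (hτ_meas : ∀ i, Measurable (τ i))
    (hτ_pos : ∀ i ω, 0 < τ i ω)
    (hGX : GX = ⨆ (u : ℝ) (_ : 0 ≤ u), MeasurableSpace.comap (X u) inferInstance)
    (hDS : ∀ t : Fin la → ℝ, (∀ i, 0 ≤ t i) →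
      μ[(fun ω => ∏ i, if t i < τ i ω then (1:ℝ) else 0) | GX]
        =ᵐ[μ] fun ω => ∏ i, Real.exp (-∫ s in Ioc (0:ℝ) (t i), lam s (X s ω)))
    (i : Fin la)
    (hGRi : ∀ t : ℝ, GRi t = ⨆ (s : ℝ) (_ : 0 ≤ s) (_ : s ≤ t),
      MeasurableSpace.comap (fun ω => if τ i ω ≤ s then (1:ℝ) else 0) inferInstance)
    (t T : ℝ) (ht : 0 ≤ t) (htT : t ≤ T) :
    μ[(fun ω => if T < τ i ω then (1:ℝ) else 0) | GX ⊔ GRi t]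
      =ᵐ[μ] fun ω => (if t < τ i ω then (1:ℝ) else 0)
        * Real.exp (-∫ s in Ioc t T, lam s (X s ω)) := by
  classical
  have hT0 : (0:ℝ) ≤ T := ht.trans htT
  -- basic measurability
  have hXu : ∀ u : ℝ, Measurable (X u) := fun u => hX.of_uncurry_left
  have hGX_le : GX ≤ m0 := by
    rw [hGX]
    exact iSup₂_le fun u _ => (hXu u).comap_le
  have hind_meas : ∀ s : ℝ, Measurable (fun ω => if τ i ω ≤ s then (1:ℝ) else 0) := fun s =>
    Measurable.ite (measurableSet_le (hτ_meas i) measurable_const) measurable_const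
      measurable_const
  have hGRi_le : GRi t ≤ m0 := by
    rw [hGRi]
    exact iSup₂_le fun s _ => iSup_le fun _ => (hind_meas s).comap_le
  have hG_le : GX ⊔ GRi t ≤ m0 := sup_le hGX_le hGRi_le
  -- survival sets
  set S : ℝ → Set Ω := fun s => {ω | s < τ i ω} with hS
  have hS_meas : ∀ s, MeasurableSet (S s) := fun s =>
    measurableSet_lt measurable_const (hτ_meas i)
  have hS_GRi : ∀ s : ℝ, 0 ≤ s → s ≤ t → MeasurableSet[GRi t] (S s) := by
    intro s hs hst
    have hle : MeasurableSpace.comap (fun ω => if τ i ω ≤ s then (1:ℝ) else 0) inferInstance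
        ≤ GRi t := by
      rw [hGRi]
      exact le_iSup_of_le s (le_iSup_of_le hs (le_iSup_of_le hst le_rfl))
    refine hle _ ?_
    refine ⟨{0}, measurableSet_singleton 0, ?_⟩
    ext ω
    simp only [S, mem_setOf_eq, mem_preimage, mem_singleton_iff]
    by_cases h : τ i ω ≤ s
    · simp [if_pos h, not_lt.mpr h]
    · simp [if_neg h, not_le.mp h]
  -- F s ω = ∫_0^s λ(u, X_u ω) du
  set F : ℝ → Ω → ℝ := fun s ω => ∫ u in Ioc (0:ℝ) s, lam u (X u ω) with hFdef
  have hF_nonneg : ∀ s ω, 0 ≤ F s ω := fun s ω =>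
    integral_nonneg fun u => (hlam_pos u (X u ω)).le
  -- single-life consequence of hDS
  have key : ∀ s : ℝ, 0 ≤ s →
      μ[(fun ω => if s < τ i ω then (1:ℝ) else 0) | GX]
        =ᵐ[μ] fun ω => Real.exp (-F s ω) := by
    intro s hs
    have h := hDS (fun j => if j = i then s else 0)
      (fun j => by by_cases h : j = i <;> simp [h, hs])
    have h1 : (fun ω => ∏ j, if (if j = i then s else 0) < τ j ω then (1:ℝ) else 0)
        = fun ω => if s < τ i ω then (1:ℝ) else 0 := by
      funext ω
      rw [Fintype.prod_eq_single i (fun j hj => by simp [hj, hτ_pos j ω])]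
      simp
    have h2 : (fun ω => ∏ j, Real.exp (-∫ u in Ioc (0:ℝ) (if j = i then s else 0),
        lam u (X u ω))) = fun ω => Real.exp (-F s ω) := by
      funext ω
      rw [Fintype.prod_eq_single i (fun j hj => by simp [hj])]
      simp [F]
    rw [h1, h2] at h
    exact h
  -- indicator functions and their integrability
  have hind_int : ∀ s : ℝ,
      Integrable (fun ω => if s < τ i ω then (1:ℝ) else 0) μ := by
    intro s
    have heq : (fun ω => if s < τ i ω then (1:ℝ) else 0)
        = (S s).indicator (fun _ => (1:ℝ)) := by
      funext ω; simp [Set.indicator_apply, S]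
    rw [heq]
    exact (integrable_const (1:ℝ)).indicator (hS_meas s)
  have hind_nonneg : ∀ s : ℝ, (0:Ω → ℝ) ≤ᵐ[μ] fun ω => if s < τ i ω then (1:ℝ) else 0 :=
    fun s => Filter.Eventually.of_forall fun ω => by positivity
  -- integral of indicator = measure
  have hind_integral : ∀ s : ℝ,
      ∫ ω, (if s < τ i ω then (1:ℝ) else 0) ∂μ = (μ (S s)).toReal := by
    intro s
    have heq : (fun ω => if s < τ i ω then (1:ℝ) else 0)
        = (S s).indicator (fun _ => (1:ℝ)) := by
      funext ω; simp [Set.indicator_apply, S]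
    rw [heq, integral_indicator (hS_meas s), setIntegral_const, smul_eq_mul, mul_one]
    rfl
  -- the bad (non integrability) set is null
  have hφ : Measurable (fun p : Ω × ℝ => lam p.2 (X p.2 p.1)) :=
    hlam.comp (measurable_snd.prodMk (hX.comp (measurable_snd.prodMk measurable_fst)))
  set N : Set Ω := {ω | ¬ Integrable (fun u => lam u (X u ω))
    (volume.restrict (Ioc (0:ℝ) T))} with hNdef
  have hN_meas : MeasurableSet N :=
    (measurableSet_integrable (f := fun ω u => lam u (X u ω))
      hφ.stronglyMeasurable).compl
  have hN_null : μ N = 0 := by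
    have hbound : ∀ n : ℕ, (μ N).toReal ≤ (μ (S (T + n))).toReal := by
      intro n
      have hTn : (0:ℝ) ≤ T + n := by positivity
      have hzero : ∀ ω ∈ N, F (T + n) ω = 0 := by
        intro ω hω
        apply integral_undef
        intro hcon
        exact hω (IntegrableOn.mono_set hcon
          (Ioc_subset_Ioc_right (by linarith [Nat.cast_nonneg (α := ℝ) n])))
      have h1 : (μ N).toReal = ∫ ω in N, Real.exp (-F (T + n) ω) ∂μ := by
        rw [setIntegral_congr_fun hN_meas (g := fun _ => (1:ℝ))
          (fun ω hω => by rw [hzero ω hω, neg_zero, Real.exp_zero])]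
        rw [setIntegral_const, smul_eq_mul, mul_one]
        rfl
      have h2 : ∫ ω in N, Real.exp (-F (T + n) ω) ∂μ
          = ∫ ω in N, (μ[(fun ω => if T + n < τ i ω then (1:ℝ) else 0) | GX]) ω ∂μ := by
        refine setIntegral_congr_ae hN_meas ?_
        filter_upwards [key (T + n) hTn] with ω hω _
        rw [hω]
      have h3 : ∫ ω in N, (μ[(fun ω => if T + n < τ i ω then (1:ℝ) else 0) | GX]) ω ∂μ
          ≤ ∫ ω, (μ[(fun ω => if T + n < τ i ω then (1:ℝ) else 0) | GX]) ω ∂μ :=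
        setIntegral_le_integral integrable_condExp (condExp_nonneg (hind_nonneg (T + n)))
      rw [h1]
      refine (h2.trans_le h3).trans ?_
      rw [integral_condExp hGX_le, hind_integral]
    have htend : Filter.Tendsto (fun n : ℕ => (μ (S (T + n))).toReal)
        Filter.atTop (nhds 0) := by
      have hanti : Antitone fun n : ℕ => S (T + n) := by
        intro n m hnm ω hω
        simp only [S, mem_setOf_eq] at hω ⊢
        have : (n:ℝ) ≤ m := Nat.cast_le.mpr hnm
        linarith
      have hempty : ⋂ n : ℕ, S (T + n) = ∅ := by
        ext ω
        simp only [mem_iInter, mem_empty_iff_false, iff_false, not_forall, S, mem_setOf_eq,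
          not_lt]
        obtain ⟨n, hn⟩ := exists_nat_ge (τ i ω - T)
        exact ⟨n, by linarith⟩
      have := tendsto_measure_iInter_atTop
        (μ := μ) (s := fun n : ℕ => S (T + n))
        (fun n => (hS_meas _).nullMeasurableSet) hanti ⟨0, measure_ne_top μ _⟩
      rw [hempty, measure_empty] at this
      exact (ENNReal.tendsto_toReal ENNReal.zero_ne_top).comp this
    have hle0 : (μ N).toReal ≤ 0 := ge_of_tendsto' htend hbound
    have : (μ N).toReal = 0 := le_antisymm hle0 ENNReal.toReal_nonneg
    rcases (ENNReal.toReal_eq_zero_iff _).mp this with h | h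
    · exact h
    · exact absurd h (measure_ne_top μ N)
  -- a.e. splitting of the integral
  have hsplit : ∀ᵐ ω ∂μ, F T ω = F t ω + ∫ u in Ioc t T, lam u (X u ω) := by
    have hcompl : ∀ᵐ ω ∂μ, ω ∉ N := by
      rw [ae_iff]
      simpa using hN_null
    filter_upwards [hcompl] with ω hω
    have hint : IntegrableOn (fun u => lam u (X u ω)) (Ioc (0:ℝ) T) volume := not_not.mp hω
    have h1 : IntegrableOn (fun u => lam u (X u ω)) (Ioc (0:ℝ) t) volume :=
      hint.mono_set (Ioc_subset_Ioc_right htT)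
    have h2 : IntegrableOn (fun u => lam u (X u ω)) (Ioc t T) volume :=
      hint.mono_set (Ioc_subset_Ioc_left ht)
    have : Ioc (0:ℝ) T = Ioc 0 t ∪ Ioc t T := (Ioc_union_Ioc_eq_Ioc ht htT).symm
    simp only [F]
    rw [this, setIntegral_union (Ioc_disjoint_Ioc_of_le le_rfl) measurableSet_Ioc h1 h2]
  -- the candidate function and its GX-measurable companion
  set fT : Ω → ℝ := fun ω => if T < τ i ω then (1:ℝ) else 0 with hfTdef
  set ft : Ω → ℝ := fun ω => if t < τ i ω then (1:ℝ) else 0 with hftdef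
  set eT : Ω → ℝ := fun ω => Real.exp (-∫ u in Ioc t T, lam u (X u ω)) with heTdef
  set r : Ω → ℝ := fun ω => (μ[fT | GX]) ω / (μ[ft | GX]) ω with hrdef
  set g : Ω → ℝ := fun ω => ft ω * eT ω with hgdef
  -- r agrees a.e. with eT
  have hr_eq : r =ᵐ[μ] eT := by
    filter_upwards [key T hT0, key t ht, hsplit] with ω h1 h2 h3
    simp only [r, eT, fT, ft]
    rw [h1, h2, ← Real.exp_sub]
    congr 1
    linarith
  have hg_eq : g =ᵐ[μ] fun ω => r ω * ft ω := by
    filter_upwards [hr_eq] with ω hω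
    simp only [g, hω, mul_comm]
  -- measurability of eT (w.r.t. m0) and integrability of g
  have heT_sm : StronglyMeasurable eT := by
    have h1 : StronglyMeasurable fun ω => ∫ u, lam u (X u ω)
        ∂(volume.restrict (Ioc t T)) :=
      hφ.stronglyMeasurable.integral_prod_right'
    exact Real.continuous_exp.comp_stronglyMeasurable h1.neg
  have hft_meas : Measurable ft :=
    Measurable.ite (measurableSet_lt measurable_const (hτ_meas i)) measurable_const
      measurable_const
  have hg_int : Integrable g μ := by
    refine Integrable.mono' (integrable_const (1:ℝ))
      (hft_meas.stronglyMeasurable.mul heT_sm).aestronglyMeasurable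
      (Filter.Eventually.of_forall fun ω => ?_)
    have h1 : 0 ≤ eT ω := (Real.exp_pos _).le
    have h2 : eT ω ≤ 1 := by
      simp only [eT]
      refine Real.exp_le_one_iff.mpr (neg_nonpos.mpr (integral_nonneg fun u => ?_))
      exact (hlam_pos u (X u ω)).le
    simp only [g, ft, Real.norm_eq_abs]
    by_cases h : t < τ i ω <;> simp [h, abs_of_nonneg h1, h2, abs_of_nonneg, le_trans h2]
  have hrf_int : Integrable (r * ft) μ := (hg_int.congr hg_eq)
  -- the G-measurable version
  have hft_smG : StronglyMeasurable[GX ⊔ GRi t] ft := by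
    have : Measurable[GRi t] ft :=
      Measurable.ite (hS_GRi t ht le_rfl) measurable_const measurable_const
    exact (this.mono (le_sup_right : GRi t ≤ GX ⊔ GRi t) le_rfl).stronglyMeasurable
  have hr_smGX : StronglyMeasurable[GX] r := by
    have h1 : Measurable[GX] (μ[fT | GX]) := stronglyMeasurable_condExp.measurable
    have h2 : Measurable[GX] (μ[ft | GX]) := stronglyMeasurable_condExp.measurable
    exact (h1.div h2).stronglyMeasurable
  have hh_sm : StronglyMeasurable[GX ⊔ GRi t] fun ω => r ω * ft ω :=
    (hr_smGX.mono (le_sup_left : GX ≤ GX ⊔ GRi t)).mul hft_smG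
  have hgm : AEStronglyMeasurable[GX ⊔ GRi t] g μ := ⟨_, hh_sm, hg_eq⟩
  -- core identity on GX-sets
  have hfT_int : Integrable fT μ := hind_int T
  have hft_int : Integrable ft μ := hind_int t
  have hcore : ∀ A : Set Ω, MeasurableSet[GX] A →
      ∫ ω in A, g ω ∂μ = ∫ ω in A, fT ω ∂μ := by
    intro A hA
    have hA0 : MeasurableSet A := hGX_le A hA
    have e1 : ∫ ω in A, g ω ∂μ = ∫ ω in A, (r * ft) ω ∂μ :=
      setIntegral_congr_ae hA0 (by filter_upwards [hg_eq] with ω h _ using h)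
    have e2 : ∫ ω in A, (r * ft) ω ∂μ = ∫ ω in A, (μ[r * ft | GX]) ω ∂μ :=
      (setIntegral_condExp hGX_le hrf_int hA).symm
    have e3 : ∫ ω in A, (μ[r * ft | GX]) ω ∂μ = ∫ ω in A, (r * μ[ft | GX]) ω ∂μ :=
      setIntegral_congr_ae hA0
        (by filter_upwards [condExp_mul_of_stronglyMeasurable_left hr_smGX hrf_int hft_int]
              with ω h _ using h)
    have e4 : ∫ ω in A, (r * μ[ft | GX]) ω ∂μ = ∫ ω in A, Real.exp (-F T ω) ∂μ := by
      refine setIntegral_congr_ae hA0 ?_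
      filter_upwards [key T hT0, key t ht] with ω h1 h2 _
      simp only [Pi.mul_apply, r, fT, ft]
      rw [h1, h2]
      rw [div_mul_cancel₀ _ (Real.exp_ne_zero _)]
    have e5 : ∫ ω in A, Real.exp (-F T ω) ∂μ = ∫ ω in A, fT ω ∂μ := by
      rw [← setIntegral_condExp hGX_le hfT_int hA]
      refine setIntegral_congr_ae hA0 ?_
      filter_upwards [key T hT0] with ω h1 _
      exact h1.symm
    rw [e1, e2, e3, e4, e5]
  have htotal : ∫ ω, g ω ∂μ = ∫ ω, fT ω ∂μ := by
    have := hcore univ MeasurableSet.univ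
    simpa [Measure.restrict_univ] using this
  -- π-system
  set C : Set (Set Ω) := {E | ∃ A, MeasurableSet[GX] A ∧
      ∃ s, 0 ≤ s ∧ s ≤ t ∧ E = A ∩ S s} with hCdef
  have hC_pi : IsPiSystem C := by
    rintro E1 ⟨A1, hA1, s1, hs1, hs1t, rfl⟩ E2 ⟨A2, hA2, s2, hs2, hs2t, rfl⟩ _
    refine ⟨A1 ∩ A2, hA1.inter hA2, max s1 s2, le_max_of_le_left hs1,
      max_le hs1t hs2t, ?_⟩
    ext ω
    simp only [mem_inter_iff, S, mem_setOf_eq, max_lt_iff]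
    tauto
  have hG_eq : (GX ⊔ GRi t : MeasurableSpace Ω) = MeasurableSpace.generateFrom C := by
    refine le_antisymm (sup_le ?_ ?_) (MeasurableSpace.generateFrom_le ?_)
    · intro A hA
      have hA' : A ∩ S 0 = A := by
        have : S 0 = univ := by
          ext ω; simp [S, hτ_pos i ω]
        rw [this, inter_univ]
      rw [← hA']
      exact MeasurableSpace.measurableSet_generateFrom ⟨A, hA, 0, le_rfl, ht, rfl⟩
    · rw [hGRi]
      refine iSup₂_le fun s hs => iSup_le fun hst => ?_
      refine Measurable.comap_le ?_
      have hSs : MeasurableSet[MeasurableSpace.generateFrom C] (S s) :=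
        MeasurableSpace.measurableSet_generateFrom ⟨univ, MeasurableSet.univ, s, hs, hst,
          (univ_inter _).symm⟩
      have hSc : MeasurableSet[MeasurableSpace.generateFrom C] {ω | τ i ω ≤ s} := by
        have : {ω | τ i ω ≤ s} = (S s)ᶜ := by
          ext ω; simp [S, not_lt]
        rw [this]
        exact hSs.compl
      exact Measurable.ite hSc measurable_const measurable_const
    · rintro E ⟨A, hA, s, hs, hst, rfl⟩
      exact ((le_sup_left : GX ≤ GX ⊔ GRi t) A hA).inter
        ((le_sup_right : GRi t ≤ GX ⊔ GRi t) _ (hS_GRi s hs hst))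
  -- extend the core identity to all sets in GX ⊔ GRi t
  have hmain : ∀ E : Set Ω, MeasurableSet[GX ⊔ GRi t] E →
      ∫ ω in E, g ω ∂μ = ∫ ω in E, fT ω ∂μ := by
    intro E hE
    refine MeasurableSpace.induction_on_inter (m := GX ⊔ GRi t)
      (C := fun E _ => ∫ ω in E, g ω ∂μ = ∫ ω in E, fT ω ∂μ) hG_eq hC_pi ?_ ?_ ?_ ?_ E hE
    · simp
    · rintro E ⟨A, hA, s, hs, hst, rfl⟩
      have hA0 : MeasurableSet A := hGX_le A hA
      have hgind : ∀ ω, g ω = (S s).indicator g ω := by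
        intro ω
        rw [Set.indicator_apply]
        by_cases h : ω ∈ S s
        · rw [if_pos h]
        · rw [if_neg h]
          simp only [S, mem_setOf_eq, not_lt] at h
          have : ¬ t < τ i ω := not_lt.mpr (h.trans hst)
          simp [g, ft, this]
      have hfind : ∀ ω, fT ω = (S s).indicator fT ω := by
        intro ω
        rw [Set.indicator_apply]
        by_cases h : ω ∈ S s
        · rw [if_pos h]
        · rw [if_neg h]
          simp only [S, mem_setOf_eq, not_lt] at h
          have : ¬ T < τ i ω := not_lt.mpr (h.trans (hst.trans htT))
          simp [fT, this]
      calc ∫ ω in A ∩ S s, g ω ∂μ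
          = ∫ ω in A, (S s).indicator g ω ∂μ := (setIntegral_indicator (hS_meas s)).symm
        _ = ∫ ω in A, g ω ∂μ := by
            refine setIntegral_congr_fun hA0 fun ω _ => (hgind ω).symm
        _ = ∫ ω in A, fT ω ∂μ := hcore A hA
        _ = ∫ ω in A, (S s).indicator fT ω ∂μ := by
            refine setIntegral_congr_fun hA0 fun ω _ => hfind ω
        _ = ∫ ω in A ∩ S s, fT ω ∂μ := setIntegral_indicator (hS_meas s)
    · intro E hEmeas hEeq
      have hE0 : MeasurableSet E := hG_le E hEmeas
      have h1 := integral_add_compl hE0 hg_int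
      have h2 := integral_add_compl hE0 hfT_int
      have := htotal
      linarith
    · intro f hdisj hfmeas hfeq
      have hf0 : ∀ n, MeasurableSet (f n) := fun n => hG_le _ (hfmeas n)
      rw [integral_iUnion hf0 hdisj hg_int.integrableOn,
        integral_iUnion hf0 hdisj hfT_int.integrableOn]
      exact tsum_congr hfeq
  -- conclude via uniqueness of conditional expectation
  have := ae_eq_condExp_of_forall_setIntegral_eq hG_le hfT_int
    (fun E _ _ => hg_int.integrableOn)
    (fun E hE _ => hmain E hE) hgm
  exact this.symm
end

section
/- For every 0 ≤ t ≤ T, one has P-almost surely E[l_a − N_T | 𝒢^N_t] = (l_a − N_t) · E[exp(−∫_t^T λ(s, X_s) ds) | 𝒢^N_t]. Equivalently, the process B_t := E[l_a − N_T | 𝒢^N_t] equals (l_a − N_t) · ₍T−t₎p̂_t, where ₍T−t₎p̂_t := E[exp(−∫_t^T λ(s, X_s) ds) | 𝒢^N_t] is the 𝒢^N-projection of the survival process. -/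
set_option maxHeartbeats 1000000
open MeasureTheory Set

lemma bdd_int {Ω : Type*} [m0 : MeasurableSpace Ω] (μ : Measure Ω) [IsFiniteMeasure μ]
    {f : Ω → ℝ} (hf : AEStronglyMeasurable f μ) (C : ℝ) (h : ∀ ω, |f ω| ≤ C) :
    Integrable f μ :=
  Integrable.mono' (integrable_const C) hf (Filter.Eventually.of_forall h)

lemma key_aux {Ω : Type*} [m0 : MeasurableSpace Ω] (μ : Measure Ω) [IsProbabilityMeasure μ]
    (GX : MeasurableSpace Ω) (hle : GX ≤ m0) (P E Y : Ω → ℝ)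
    (hP : Integrable P μ) (hYP : Integrable (Y * P) μ)
    (hY : StronglyMeasurable[GX] Y) (hcond : μ[P|GX] =ᵐ[μ] E) :
    ∫ ω, Y ω * P ω ∂μ = ∫ ω, Y ω * E ω ∂μ := by
  haveI : SigmaFinite (μ.trim hle) := inferInstance
  have h1 : ∫ ω, (Y * P) ω ∂μ = ∫ ω, (μ[Y * P|GX]) ω ∂μ := (integral_condExp hle).symm
  have h2 : μ[Y * P|GX] =ᵐ[μ] Y * μ[P|GX] := condExp_mul_of_stronglyMeasurable_left hY hYP hP
  have h3 : μ[Y * P|GX] =ᵐ[μ] fun ω => Y ω * E ω := by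
    filter_upwards [h2, hcond] with ω h2 hc
    simp only [Pi.mul_apply] at h2 ⊢
    rw [h2, hc]
  calc ∫ ω, Y ω * P ω ∂μ = ∫ ω, (μ[Y * P|GX]) ω ∂μ := h1
    _ = ∫ ω, Y ω * E ω ∂μ := integral_congr_ae h3

lemma gx_meas_aux {Ω : Type*} [m0 : MeasurableSpace Ω] (μ : Measure Ω) [IsProbabilityMeasure μ]
    (a b : ℝ) (hab : a ≤ b)
    (φ : ℝ → Ω → ℝ) (hφ : Measurable (Function.uncurry φ))
    (C : ℝ) (hC : 0 ≤ C) (hbd : ∀ s ω, 0 ≤ φ s ω ∧ φ s ω ≤ C)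
    (GX : MeasurableSpace Ω) (hle : GX ≤ m0)
    (hsec : ∀ s ∈ Ioc a b, Measurable[GX] (φ s)) :
    ∃ W : Ω → ℝ, StronglyMeasurable[GX] W ∧ (∀ ω, 0 ≤ W ω) ∧
      (fun ω => ∫ s in Ioc a b, φ s ω) =ᵐ[μ] W := by
  letI : MeasurableSpace Ω := m0
  haveI : SigmaFinite (μ.trim hle) := inferInstance
  set ν : Measure ℝ := volume.restrict (Ioc a b) with hν
  haveI : IsFiniteMeasure ν := by
    constructor
    rw [hν, Measure.restrict_apply_univ, Real.volume_Ioc]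
    exact ENNReal.ofReal_lt_top
  set D : ℝ := C * (b - a) with hD
  have hD0 : 0 ≤ D := mul_nonneg hC (by linarith)
  set G : Ω → ℝ := fun ω => ∫ s, φ s ω ∂ν with hG
  have hGsm : StronglyMeasurable G := by
    have : Measurable fun p : Ω × ℝ => φ p.2 p.1 := hφ.comp measurable_swap
    exact StronglyMeasurable.integral_prod_right' (ν := ν) this.stronglyMeasurable
  have hpath_int : ∀ ω, Integrable (fun s => φ s ω) ν := by
    intro ω
    refine bdd_int ν ?_ C fun s => abs_le.2 ⟨by linarith [(hbd s ω).1], (hbd s ω).2⟩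
    exact (hφ.comp (measurable_id.prodMk measurable_const)).aestronglyMeasurable
  have hGbd : ∀ ω, 0 ≤ G ω ∧ G ω ≤ D := by
    intro ω
    constructor
    · exact integral_nonneg fun s => (hbd s ω).1
    · have h1 : G ω ≤ ∫ _, C ∂ν :=
        integral_mono (hpath_int ω) (integrable_const C) (fun s => (hbd s ω).2)
      have h2 : ∫ _, C ∂ν = (ν univ).toReal • C := integral_const C
      have h3 : (ν univ).toReal • C ≤ D := by
        rw [hν, Measure.restrict_apply_univ, Real.volume_Ioc, smul_eq_mul,
          ENNReal.toReal_ofReal (by linarith), hD]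
        ring_nf
        exact le_rfl
      linarith [h1, h2 ▸ h1]
  have hGabs : ∀ ω, |G ω| ≤ D := fun ω => abs_le.2 ⟨by linarith [(hGbd ω).1], (hGbd ω).2⟩
  have hGint : Integrable G μ := bdd_int μ hGsm.aestronglyMeasurable D hGabs
  set W0 : Ω → ℝ := μ[G|GX] with hW0def
  have hW0sm : StronglyMeasurable[GX] W0 := stronglyMeasurable_condExp
  have hW0nn : 0 ≤ᵐ[μ] W0 :=
    condExp_nonneg (Filter.Eventually.of_forall fun ω => (hGbd ω).1)
  have hW0le : W0 ≤ᵐ[μ] fun _ => D := by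
    have h := condExp_mono (m := GX) hGint (integrable_const D)
      (Filter.Eventually.of_forall fun ω => (hGbd ω).2)
    rw [condExp_const hle D] at h
    exact h
  set W : Ω → ℝ := fun ω => min (max (W0 ω) 0) D with hWdef
  have hWsm : StronglyMeasurable[GX] W :=
    Measurable.stronglyMeasurable ((hW0sm.measurable.max measurable_const).min measurable_const)
  have hWnn : ∀ ω, 0 ≤ W ω := fun ω => le_min (le_max_right _ 0) hD0
  have hWle : ∀ ω, W ω ≤ D := fun ω => min_le_right _ _
  have hWabs : ∀ ω, |W ω| ≤ D := fun ω => abs_le.2 ⟨by linarith [hWnn ω], hWle ω⟩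
  have hcondW : μ[G|GX] =ᵐ[μ] W := by
    filter_upwards [hW0nn, hW0le] with ω h1 h2
    have h1' : (0:ℝ) ≤ W0 ω := h1
    have h2' : W0 ω ≤ D := h2
    simp only [hWdef, max_eq_left h1', min_eq_left h2']
    rfl
  have hWint : Integrable W μ := bdd_int μ (hWsm.mono hle).aestronglyMeasurable D hWabs
  have hWG_int : Integrable (W * G) μ := by
    refine bdd_int μ ((hWsm.mono hle).aestronglyMeasurable.mul hGsm.aestronglyMeasurable)
      (D * D) fun ω => ?_
    rw [Pi.mul_apply, abs_mul]
    exact mul_le_mul (hWabs ω) (hGabs ω) (abs_nonneg _) hD0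
  have hGG_int : Integrable (fun ω => G ω * G ω) μ := by
    refine bdd_int μ (hGsm.aestronglyMeasurable.mul hGsm.aestronglyMeasurable)
      (D * D) fun ω => ?_
    rw [abs_mul]
    exact mul_le_mul (hGabs ω) (hGabs ω) (abs_nonneg _) hD0
  have hWW_int : Integrable (fun ω => W ω * W ω) μ := by
    refine bdd_int μ ((hWsm.mono hle).aestronglyMeasurable.mul
      (hWsm.mono hle).aestronglyMeasurable) (D * D) fun ω => ?_
    rw [abs_mul]
    exact mul_le_mul (hWabs ω) (hWabs ω) (abs_nonneg _) hD0
  have step1 : ∫ ω, W ω * G ω ∂μ = ∫ ω, W ω * W ω ∂μ :=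
    key_aux μ GX hle G W W hGint hWG_int hWsm hcondW
  have hswap : ∀ H : Ω → ℝ, Measurable H → (∀ ω, |H ω| ≤ D) →
      Integrable (Function.uncurry fun ω s => H ω * φ s ω) (μ.prod ν) := by
    intro H hH hHbd
    refine bdd_int (μ.prod ν) ?_ (D * C) fun p => ?_
    · exact ((hH.comp measurable_fst).mul (hφ.comp measurable_swap)).aestronglyMeasurable
    · have : |H p.1 * φ p.2 p.1| ≤ D * C := by
        rw [abs_mul]
        exact mul_le_mul (hHbd p.1) (by
          rw [abs_of_nonneg (hbd p.2 p.1).1]; exact (hbd p.2 p.1).2) (abs_nonneg _) hD0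
      simpa [Function.uncurry] using this
  have step2 : ∫ ω, G ω * G ω ∂μ = ∫ ω, W ω * G ω ∂μ := by
    have l1 : ∀ H : Ω → ℝ, ∀ ω, H ω * G ω = ∫ s, H ω * φ s ω ∂ν := by
      intro H ω
      rw [hG]
      simp only
      rw [← integral_const_mul]
    have swapG := integral_integral_swap (f := fun ω s => G ω * φ s ω)
      (hswap G hGsm.measurable hGabs)
    have swapW := integral_integral_swap (f := fun ω s => W ω * φ s ω)
      (hswap W ((hWsm.mono hle).measurable) hWabs)
    have mid : ∫ s, ∫ ω, G ω * φ s ω ∂μ ∂ν = ∫ s, ∫ ω, W ω * φ s ω ∂μ ∂ν := by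
      rw [hν]
      refine setIntegral_congr_fun measurableSet_Ioc fun s hs => ?_
      have hk := key_aux μ GX hle G W (φ s) hGint (by
          refine bdd_int μ (((hsec s hs).mono hle le_rfl).aestronglyMeasurable.mul
            hGsm.aestronglyMeasurable) (C * D) fun ω => ?_
          rw [Pi.mul_apply, abs_mul]
          refine mul_le_mul (by rw [abs_of_nonneg (hbd s ω).1]; exact (hbd s ω).2)
            (hGabs ω) (abs_nonneg _) hC)
        ((hsec s hs).stronglyMeasurable) hcondW
      calc ∫ ω, G ω * φ s ω ∂μ = ∫ ω, φ s ω * G ω ∂μ := by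
            refine integral_congr_ae (Filter.Eventually.of_forall fun ω => ?_)
            ring
        _ = ∫ ω, φ s ω * W ω ∂μ := hk
        _ = ∫ ω, W ω * φ s ω ∂μ := by
            refine integral_congr_ae (Filter.Eventually.of_forall fun ω => ?_)
            ring
    calc ∫ ω, G ω * G ω ∂μ = ∫ ω, ∫ s, G ω * φ s ω ∂ν ∂μ :=
          integral_congr_ae (Filter.Eventually.of_forall fun ω => l1 G ω)
      _ = ∫ s, ∫ ω, G ω * φ s ω ∂μ ∂ν := swapG
      _ = ∫ s, ∫ ω, W ω * φ s ω ∂μ ∂ν := mid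
      _ = ∫ ω, ∫ s, W ω * φ s ω ∂ν ∂μ := swapW.symm
      _ = ∫ ω, W ω * G ω ∂μ :=
          integral_congr_ae (Filter.Eventually.of_forall fun ω => (l1 W ω).symm)
  have hsq_int : Integrable (fun ω => (G ω - W ω) ^ 2) μ := by
    have : (fun ω => (G ω - W ω) ^ 2)
        = fun ω => G ω * G ω - 2 * (W ω * G ω) + W ω * W ω := by
      funext ω; ring
    rw [this]
    exact (hGG_int.sub (hWG_int.const_mul 2)).add hWW_int
  have hsq : ∫ ω, (G ω - W ω) ^ 2 ∂μ = 0 := by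
    have expand : (fun ω => (G ω - W ω) ^ 2)
        = fun ω => G ω * G ω - 2 * (W ω * G ω) + W ω * W ω := by
      funext ω; ring
    have hWG2_int : Integrable (fun ω => 2 * (W ω * G ω)) μ := by
      have h := hWG_int.const_mul 2
      simpa [Pi.mul_apply] using h
    have hsub_int : Integrable (fun ω => G ω * G ω - 2 * (W ω * G ω)) μ :=
      hGG_int.sub hWG2_int
    rw [expand, integral_add hsub_int hWW_int,
      integral_sub hGG_int hWG2_int, integral_const_mul, step2, ← step1]
    ring
  have hzero : (fun ω => (G ω - W ω) ^ 2) =ᵐ[μ] 0 :=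
    (integral_eq_zero_iff_of_nonneg (fun ω => sq_nonneg _) hsq_int).1 hsq
  refine ⟨W, hWsm, hWnn, ?_⟩
  filter_upwards [hzero] with ω h
  have h' : (G ω - W ω) ^ 2 = 0 := h
  have h0 : G ω - W ω = 0 := pow_eq_zero_iff (two_ne_zero) |>.1 h'
  exact sub_eq_zero.mp h0

/-- For the death-counting process `N` of doubly-stochastic lifetimes and `0 ≤ t ≤ T`,
`E[l_a − N_T | 𝒢^N_t] = (l_a − N_t) · E[exp(−∫_t^T λ(s, X_s) ds) | 𝒢^N_t]` a.s.; i.e. the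
process `B_t = E[l_a − N_T | 𝒢^N_t]` equals `(l_a − N_t)` times the `𝒢^N`-projection of the
survival process. -/
theorem stmt_5 {Ω : Type*} (GN : ℝ → MeasurableSpace Ω)
    [m0 : MeasurableSpace Ω] (μ : Measure Ω) [IsProbabilityMeasure μ]
    (X : ℝ → Ω → ℝ) (hX : Measurable (Function.uncurry X))
    (lam : ℝ → ℝ → ℝ) (hlam : Measurable (Function.uncurry lam))
    (hlam_pos : ∀ t x, 0 < lam t x)
    (hlam_int : ∀ Tstar : ℝ, 0 < Tstar →
      Integrable (fun ω => ∫ u in Ioc (0:ℝ) Tstar, lam u (X u ω)) μ)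
    (la : ℕ) (hla : 1 ≤ la)
    (τ : Fin la → Ω → ℝ) (hτ_meas : ∀ i, Measurable (τ i))
    (hτ_pos : ∀ i ω, 0 < τ i ω)
    (GX : MeasurableSpace Ω)
    (hGX : GX = ⨆ (u : ℝ) (_ : 0 ≤ u), MeasurableSpace.comap (X u) inferInstance)
    (hDS : ∀ t : Fin la → ℝ, (∀ i, 0 ≤ t i) →
      μ[(fun ω => ∏ i, if t i < τ i ω then (1:ℝ) else 0) | GX]
        =ᵐ[μ] fun ω => ∏ i, Real.exp (-∫ s in Ioc (0:ℝ) (t i), lam s (X s ω)))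
    (N : ℝ → Ω → ℝ)
    (hN : ∀ (s : ℝ) (ω : Ω), N s ω = ∑ i, if τ i ω ≤ s then (1:ℝ) else 0)
    (hGN : ∀ t : ℝ, GN t = ⨆ (s : ℝ) (_ : 0 ≤ s) (_ : s ≤ t),
      MeasurableSpace.comap (N s) inferInstance)
    (t T : ℝ) (ht : 0 ≤ t) (htT : t ≤ T) :
    μ[(fun ω => (la : ℝ) - N T ω) | GN t]
      =ᵐ[μ] fun ω => ((la : ℝ) - N t ω)
        * (μ[(fun ω' => Real.exp (-∫ s in Ioc t T, lam s (X s ω'))) | GN t]) ω := by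
  letI : MeasurableSpace Ω := m0
  have hTnn : 0 ≤ T := ht.trans htT
  -- basic measurability
  have hXs : ∀ s : ℝ, Measurable (X s) :=
    fun s => hX.comp (measurable_const.prodMk measurable_id)
  have hXsGX : ∀ s : ℝ, 0 ≤ s → Measurable[GX] (X s) := by
    intro s hs
    rw [hGX]
    exact Measurable.of_comap_le (le_iSup_of_le s (le_iSup_of_le hs le_rfl))
  have hGXle : GX ≤ m0 := by
    rw [hGX]
    exact iSup_le fun u => iSup_le fun _ => (hXs u).comap_le
  have hNmeas : ∀ s : ℝ, Measurable (N s) := by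
    intro s
    have hfe : N s = fun ω => ∑ i, if τ i ω ≤ s then (1:ℝ) else 0 :=
      funext fun ω => hN s ω
    rw [hfe]
    exact Finset.measurable_sum _ fun i _ =>
      Measurable.ite (measurableSet_le (hτ_meas i) measurable_const)
        measurable_const measurable_const
  have hGNle : GN t ≤ m0 := by
    rw [hGN]
    exact iSup_le fun s => iSup_le fun _ => iSup_le fun _ => (hNmeas s).comap_le
  haveI hSF : SigmaFinite (μ.trim hGNle) := inferInstance
  have hφm : Measurable fun p : ℝ × Ω => lam p.1 (X p.1 p.2) :=
    hlam.comp (measurable_fst.prodMk hX)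
  have hLm : ∀ a b : ℝ, Measurable (fun ω => ∫ s in Ioc a b, lam s (X s ω)) := by
    intro a b
    have h1 : Measurable fun p : Ω × ℝ => lam p.2 (X p.2 p.1) := hφm.comp measurable_swap
    exact (StronglyMeasurable.integral_prod_right'
      (ν := volume.restrict (Ioc a b)) h1.stronglyMeasurable).measurable
  have hLnn : ∀ a b : ℝ, ∀ ω, 0 ≤ ∫ s in Ioc a b, lam s (X s ω) :=
    fun a b ω => integral_nonneg fun s => (hlam_pos s _).le
  have hpath_m : ∀ ω, Measurable fun s => lam s (X s ω) :=
    fun ω => hφm.comp (measurable_id.prodMk measurable_const)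
  -- the indicator products
  have hPm : ∀ v : Fin la → ℝ,
      Measurable (fun ω => ∏ j, if v j < τ j ω then (1:ℝ) else 0) := fun v =>
    Finset.measurable_prod _ fun j _ =>
      Measurable.ite (measurableSet_lt measurable_const (hτ_meas j))
        measurable_const measurable_const
  have hPbd : ∀ (v : Fin la → ℝ) ω,
      0 ≤ (∏ j, if v j < τ j ω then (1:ℝ) else 0)
        ∧ (∏ j, if v j < τ j ω then (1:ℝ) else 0) ≤ 1 := by
    intro v ω
    constructor
    · exact Finset.prod_nonneg fun j _ => by positivity
    · exact Finset.prod_le_one (fun j _ => by positivity)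
        (fun j _ => by split <;> norm_num)
  have hEm : ∀ v : Fin la → ℝ,
      Measurable (fun ω => ∏ j, Real.exp (-∫ s in Ioc (0:ℝ) (v j), lam s (X s ω))) :=
    fun v => Finset.measurable_prod _ fun j _ =>
      (Real.measurable_exp.comp (hLm 0 (v j)).neg)
  have hEbd : ∀ (v : Fin la → ℝ) ω,
      0 ≤ (∏ j, Real.exp (-∫ s in Ioc (0:ℝ) (v j), lam s (X s ω)))
        ∧ (∏ j, Real.exp (-∫ s in Ioc (0:ℝ) (v j), lam s (X s ω))) ≤ 1 := by
    intro v ω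
    constructor
    · exact Finset.prod_nonneg fun j _ => (Real.exp_pos _).le
    · exact Finset.prod_le_one (fun j _ => (Real.exp_pos _).le)
        (fun j _ => Real.exp_le_one_iff.2 (neg_nonpos.2 (hLnn 0 (v j) ω)))
  -- KEY identity
  have key : ∀ (v : Fin la → ℝ), (∀ j, 0 ≤ v j) → ∀ Y : Ω → ℝ,
      StronglyMeasurable[GX] Y → (∀ ω, |Y ω| ≤ 1) →
      ∫ ω, Y ω * (∏ j, if v j < τ j ω then (1:ℝ) else 0) ∂μ
        = ∫ ω, Y ω * ∏ j, Real.exp (-∫ s in Ioc (0:ℝ) (v j), lam s (X s ω)) ∂μ := by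
    intro v hv Y hY hYbd
    refine key_aux μ GX hGXle _ _ Y ?_ ?_ hY (hDS v hv)
    · exact bdd_int μ (hPm v).aestronglyMeasurable 1 fun ω =>
        abs_le.2 ⟨by linarith [(hPbd v ω).1], (hPbd v ω).2⟩
    · refine bdd_int μ (((hY.mono hGXle).measurable.mul (hPm v)).aestronglyMeasurable)
        1 fun ω => ?_
      rw [Pi.mul_apply, abs_mul]
      refine mul_le_one₀ (hYbd ω) (abs_nonneg _) ?_
      rw [abs_of_nonneg (hPbd v ω).1]
      exact (hPbd v ω).2
  -- GX-measurable version of the survival integrand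
  haveI hfinIoc : IsFiniteMeasure (volume.restrict (Ioc t T)) := by
    constructor
    rw [Measure.restrict_apply_univ, Real.volume_Ioc]
    exact ENNReal.ofReal_lt_top
  have hmin_sec : ∀ n : ℕ, ∀ s ∈ Ioc t T,
      Measurable[GX] fun ω => min (lam s (X s ω)) (n:ℝ) := by
    intro n s hs
    have hlams : Measurable fun x : ℝ => lam s x :=
      hlam.comp (measurable_const.prodMk measurable_id)
    exact (hlams.comp (hXsGX s (ht.trans hs.1.le))).min measurable_const
  have hmin_unc : ∀ n : ℕ,
      Measurable (Function.uncurry fun s ω => min (lam s (X s ω)) (n:ℝ)) :=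
    fun n => hφm.min measurable_const
  choose Wn hWn_sm hWn_nn hWn_ae using fun n : ℕ =>
    gx_meas_aux μ t T htT (fun s ω => min (lam s (X s ω)) (n:ℝ)) (hmin_unc n)
      (n:ℝ) (Nat.cast_nonneg n)
      (fun s ω => ⟨le_min (hlam_pos s _).le (Nat.cast_nonneg n), min_le_right _ _⟩)
      GX hGXle (hmin_sec n)
  set Λ' : Ω → ℝ := fun ω => (⨆ n : ℕ, ENNReal.ofReal (Wn n ω)).toReal with hΛ'def
  have hΛ'sm : StronglyMeasurable[GX] Λ' := by
    refine Measurable.stronglyMeasurable ?_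
    exact ENNReal.measurable_toReal.comp
      (Measurable.iSup fun n => ENNReal.measurable_ofReal.comp (hWn_sm n).measurable)
  have hΛ'nn : ∀ ω, 0 ≤ Λ' ω := fun ω => ENNReal.toReal_nonneg
  have hsup_min : ∀ x : ℝ, 0 ≤ x →
      (⨆ n : ℕ, ENNReal.ofReal (min x (n:ℝ))) = ENNReal.ofReal x := by
    intro x hx
    refine le_antisymm (iSup_le fun n => ENNReal.ofReal_le_ofReal (min_le_left _ _)) ?_
    obtain ⟨n, hn⟩ := exists_nat_ge x
    exact le_iSup_of_le n (by rw [min_eq_left hn])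
  have hLam_eq : ∀ ω, (∫ s in Ioc t T, lam s (X s ω))
      = (⨆ n : ℕ, ENNReal.ofReal (∫ s in Ioc t T, min (lam s (X s ω)) (n:ℝ))).toReal := by
    intro ω
    rw [integral_eq_lintegral_of_nonneg_ae
      (Filter.Eventually.of_forall fun s => (hlam_pos s _).le)
      (hpath_m ω).aestronglyMeasurable]
    congr 1
    have h1 : ∀ n : ℕ, ENNReal.ofReal (∫ s in Ioc t T, min (lam s (X s ω)) (n:ℝ))
        = ∫⁻ s in Ioc t T, ENNReal.ofReal (min (lam s (X s ω)) (n:ℝ)) := by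
      intro n
      refine ofReal_integral_eq_lintegral_ofReal ?_
        (Filter.Eventually.of_forall fun s =>
          le_min (hlam_pos s _).le (Nat.cast_nonneg n))
      refine bdd_int _ ((hpath_m ω).min measurable_const).aestronglyMeasurable (n:ℝ)
        fun s => ?_
      rw [abs_of_nonneg (le_min (hlam_pos s _).le (Nat.cast_nonneg n))]
      exact min_le_right _ _
    have h2 : ∀ s : ℝ, ENNReal.ofReal (lam s (X s ω))
        = ⨆ n : ℕ, ENNReal.ofReal (min (lam s (X s ω)) (n:ℝ)) :=
      fun s => (hsup_min _ (hlam_pos s _).le).symm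
    calc ∫⁻ s in Ioc t T, ENNReal.ofReal (lam s (X s ω))
        = ∫⁻ s in Ioc t T, ⨆ n : ℕ, ENNReal.ofReal (min (lam s (X s ω)) (n:ℝ)) := by
          exact lintegral_congr fun s => h2 s
      _ = ⨆ n : ℕ, ∫⁻ s in Ioc t T, ENNReal.ofReal (min (lam s (X s ω)) (n:ℝ)) := by
          refine lintegral_iSup (fun n => ?_) (fun n m hnm s => ?_)
          · exact ENNReal.measurable_ofReal.comp ((hpath_m ω).min measurable_const)
          · exact ENNReal.ofReal_le_ofReal
              (min_le_min le_rfl (by exact_mod_cast hnm))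
      _ = ⨆ n : ℕ, ENNReal.ofReal (∫ s in Ioc t T, min (lam s (X s ω)) (n:ℝ)) := by
          exact iSup_congr fun n => (h1 n).symm
  have hΛae : (fun ω => ∫ s in Ioc t T, lam s (X s ω)) =ᵐ[μ] Λ' := by
    have hall : ∀ᵐ ω ∂μ, ∀ n : ℕ,
        (∫ s in Ioc t T, min (lam s (X s ω)) (n:ℝ)) = Wn n ω :=
      ae_all_iff.2 fun n => hWn_ae n
    filter_upwards [hall] with ω hω
    rw [hLam_eq ω, hΛ'def]
    simp only []
    congr 1
    exact iSup_congr fun n => by rw [hω n]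
  set Ysur : Ω → ℝ := fun ω => Real.exp (-Λ' ω) with hYdef
  have hYsm : StronglyMeasurable[GX] Ysur :=
    (Real.measurable_exp.comp hΛ'sm.measurable.neg).stronglyMeasurable
  have hYbd : ∀ ω, |Ysur ω| ≤ 1 := by
    intro ω
    rw [hYdef, abs_of_pos (Real.exp_pos _)]
    exact Real.exp_le_one_iff.2 (neg_nonpos.2 (hΛ'nn ω))
  have hYae : (fun ω => Real.exp (-∫ s in Ioc t T, lam s (X s ω))) =ᵐ[μ] Ysur := by
    filter_upwards [hΛae] with ω hω
    rw [hYdef]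
    simp only []
    rw [hω]
  -- a.e. pathwise integrability
  set Bad : Set Ω :=
    {ω | ¬ Integrable (fun s => lam s (X s ω)) (volume.restrict (Ioc 0 T))} with hBdef
  have hBad_meas : MeasurableSet Bad := by
    have h1 : MeasurableSet
        {ω | Integrable ((fun ω s => lam s (X s ω)) ω) (volume.restrict (Ioc 0 T))} :=
      measurableSet_integrable (hφm.comp measurable_swap).stronglyMeasurable
    exact h1.compl
  have hBad0 : μ Bad = 0 := by
    have hkey1 : ∀ n : ℕ,
        ∫ ω, (∏ j, if (n:ℝ) < τ j ω then (1:ℝ) else 0) ∂μ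
          = ∫ ω, (∏ _j : Fin la, Real.exp (-∫ s in Ioc (0:ℝ) ((n:ℝ)), lam s (X s ω))) ∂μ := by
      intro n
      have h := key (fun _ => (n:ℝ)) (fun _ => Nat.cast_nonneg n) (fun _ => 1)
        stronglyMeasurable_const (fun ω => by norm_num)
      simpa using h
    have hEint : ∀ n : ℕ, Integrable
        (fun ω => ∏ _j : Fin la, Real.exp (-∫ s in Ioc (0:ℝ) ((n:ℝ)), lam s (X s ω))) μ := by
      intro n
      exact bdd_int μ (hEm fun _ => (n:ℝ)).aestronglyMeasurable 1 fun ω =>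
        abs_le.2 ⟨by linarith [(hEbd (fun _ => (n:ℝ)) ω).1], (hEbd (fun _ => (n:ℝ)) ω).2⟩
    have hle1 : ∀ n : ℕ, T ≤ (n:ℝ) →
        (μ Bad).toReal ≤ ∫ ω, (∏ j, if (n:ℝ) < τ j ω then (1:ℝ) else 0) ∂μ := by
      intro n hn
      have hone : ∀ ω ∈ Bad,
          (∏ _j : Fin la, Real.exp (-∫ s in Ioc (0:ℝ) ((n:ℝ)), lam s (X s ω))) = 1 := by
        intro ω hω
        have hni : ¬ Integrable (fun s => lam s (X s ω)) (volume.restrict (Ioc 0 (n:ℝ))) := by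
          intro hcon
          exact hω (hcon.mono_measure
            (Measure.restrict_mono (Ioc_subset_Ioc le_rfl hn) le_rfl))
        rw [integral_undef hni]
        simp
      have h2 : ∫ ω in Bad, (∏ _j : Fin la, Real.exp (-∫ s in Ioc (0:ℝ) ((n:ℝ)), lam s (X s ω))) ∂μ
          = (μ Bad).toReal := by
        rw [setIntegral_congr_fun hBad_meas hone, setIntegral_const]
        simp
        rfl
      have h3 : ∫ ω in Bad, (∏ _j : Fin la, Real.exp (-∫ s in Ioc (0:ℝ) ((n:ℝ)), lam s (X s ω))) ∂μ
          ≤ ∫ ω, (∏ _j : Fin la, Real.exp (-∫ s in Ioc (0:ℝ) ((n:ℝ)), lam s (X s ω))) ∂μ :=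
        setIntegral_le_integral (hEint n)
          (Filter.Eventually.of_forall fun ω => (hEbd _ ω).1)
      rw [← hkey1 n] at h3
      rw [← h2]
      exact h3
    have hlim : Filter.Tendsto (fun n : ℕ =>
        ∫ ω, (∏ j, if (n:ℝ) < τ j ω then (1:ℝ) else 0) ∂μ) Filter.atTop (nhds 0) := by
      have hlim0 : Filter.Tendsto (fun n : ℕ =>
          ∫ ω, (∏ j, if (n:ℝ) < τ j ω then (1:ℝ) else 0) ∂μ) Filter.atTop
          (nhds (∫ _ω, (0:ℝ) ∂μ)) := by
        refine tendsto_integral_of_dominated_convergence (fun _ => (1:ℝ))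
          (fun n => (hPm fun _ => (n:ℝ)).aestronglyMeasurable) (integrable_const 1)
          (fun n => Filter.Eventually.of_forall fun ω => by
            show |∏ j, if (n:ℝ) < τ j ω then (1:ℝ) else 0| ≤ (1:ℝ)
            exact abs_le.2 ⟨by linarith [(hPbd (fun _ => (n:ℝ)) ω).1],
              (hPbd (fun _ => (n:ℝ)) ω).2⟩)
          (Filter.Eventually.of_forall fun ω => ?_)
        have j0 : Fin la := ⟨0, hla⟩
        obtain ⟨M, hM⟩ := exists_nat_ge (τ j0 ω)
        refine Filter.Tendsto.congr' ?_ tendsto_const_nhds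
        rw [Filter.EventuallyEq, Filter.eventually_atTop]
        refine ⟨M, fun n hn => ?_⟩
        symm
        refine Finset.prod_eq_zero (Finset.mem_univ j0) ?_
        rw [if_neg]
        push_neg
        calc τ j0 ω ≤ (M:ℝ) := hM
          _ ≤ (n:ℝ) := by exact_mod_cast hn
      simpa using hlim0
    have hfin : (μ Bad).toReal ≤ 0 := by
      refine ge_of_tendsto hlim ?_
      obtain ⟨M, hM⟩ := exists_nat_ge T
      rw [Filter.eventually_atTop]
      refine ⟨M, fun n hn => hle1 n (hM.trans (by exact_mod_cast hn))⟩
    have : (μ Bad).toReal = 0 := le_antisymm hfin ENNReal.toReal_nonneg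
    rw [ENNReal.toReal_eq_zero_iff] at this
    rcases this with h | h
    · exact h
    · exact absurd h (measure_ne_top μ Bad)
  have hadd : ∀ᵐ ω ∂μ, (∫ s in Ioc (0:ℝ) T, lam s (X s ω))
      = (∫ s in Ioc (0:ℝ) t, lam s (X s ω)) + ∫ s in Ioc t T, lam s (X s ω) := by
    have hGood : ∀ᵐ ω ∂μ, Integrable (fun s => lam s (X s ω)) (volume.restrict (Ioc 0 T)) := by
      rw [ae_iff]
      exact hBad0
    filter_upwards [hGood] with ω hω
    have hω' : IntegrableOn (fun s => lam s (X s ω)) (Ioc 0 T) volume := hω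
    have h1 : IntegrableOn (fun s => lam s (X s ω)) (Ioc 0 t) volume :=
      hω'.mono_set (Ioc_subset_Ioc le_rfl htT)
    have h2 : IntegrableOn (fun s => lam s (X s ω)) (Ioc t T) volume :=
      hω'.mono_set (Ioc_subset_Ioc ht le_rfl)
    rw [← Ioc_union_Ioc_eq_Ioc ht htT]
    exact setIntegral_union (Ioc_disjoint_Ioc_of_le le_rfl) measurableSet_Ioc h1 h2
  -- product manipulation helpers
  have herase : ∀ (b : Fin la → ℝ) (i : Fin la) (r : ℝ) (ω : Ω),
      (∏ j ∈ Finset.univ.erase i, if Function.update b i r j < τ j ω then (1:ℝ) else 0)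
        = ∏ j ∈ Finset.univ.erase i, if b j < τ j ω then (1:ℝ) else 0 :=
    fun b i r ω => Finset.prod_congr rfl fun j hj => by
      rw [Function.update_of_ne (Finset.ne_of_mem_erase hj)]
  have hcollapse : ∀ (b : Fin la → ℝ) (i : Fin la) (r : ℝ), b i ≤ r → ∀ ω : Ω,
      (∏ j, if b j < τ j ω then (1:ℝ) else 0) * (if r < τ i ω then (1:ℝ) else 0)
        = ∏ j, if Function.update b i r j < τ j ω then (1:ℝ) else 0 := by
    intro b i r hbir ω
    calc (∏ j, if b j < τ j ω then (1:ℝ) else 0) * (if r < τ i ω then (1:ℝ) else 0)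
        = ((if b i < τ i ω then (1:ℝ) else 0) *
            ∏ j ∈ Finset.univ.erase i, if b j < τ j ω then (1:ℝ) else 0) *
            (if r < τ i ω then (1:ℝ) else 0) := by
          rw [← Finset.mul_prod_erase Finset.univ
            (fun j => if b j < τ j ω then (1:ℝ) else 0) (Finset.mem_univ i)]
      _ = ((if b i < τ i ω then (1:ℝ) else 0) * (if r < τ i ω then (1:ℝ) else 0)) *
            ∏ j ∈ Finset.univ.erase i, if b j < τ j ω then (1:ℝ) else 0 := by ring
      _ = (if r < τ i ω then (1:ℝ) else 0) *
            ∏ j ∈ Finset.univ.erase i, if b j < τ j ω then (1:ℝ) else 0 := by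
          by_cases h : r < τ i ω
          · rw [if_pos h, if_pos (lt_of_le_of_lt hbir h)]
            ring
          · rw [if_neg h]
            ring
      _ = (if Function.update b i r i < τ i ω then (1:ℝ) else 0) *
            ∏ j ∈ Finset.univ.erase i, if Function.update b i r j < τ j ω then (1:ℝ) else 0 := by
          rw [Function.update_self, herase b i r ω]
      _ = ∏ j, if Function.update b i r j < τ j ω then (1:ℝ) else 0 :=
          Finset.mul_prod_erase Finset.univ
            (fun j => if Function.update b i r j < τ j ω then (1:ℝ) else 0)
            (Finset.mem_univ i)
  have hupd_nonneg : ∀ (b : Fin la → ℝ), (∀ j, 0 ≤ b j) → ∀ (i : Fin la) (r : ℝ),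
      0 ≤ r → ∀ j, 0 ≤ Function.update b i r j := by
    intro b hb i r hr j
    rw [Function.update_apply]
    split
    · exact hr
    · exact hb j
  -- the core identity
  have core : ∀ (b : Fin la → ℝ), (∀ j, 0 ≤ b j) → (∀ j, b j ≤ t) → ∀ i : Fin la,
      ∫ ω, (∏ j, if b j < τ j ω then (1:ℝ) else 0) * (if T < τ i ω then (1:ℝ) else 0) ∂μ
        = ∫ ω, (∏ j, if b j < τ j ω then (1:ℝ) else 0) *
            ((if t < τ i ω then (1:ℝ) else 0) *
              Real.exp (-∫ s in Ioc t T, lam s (X s ω))) ∂μ := by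
    intro b hb0 hbt i
    have hL1 : ∫ ω, (∏ j, if b j < τ j ω then (1:ℝ) else 0) *
          (if T < τ i ω then (1:ℝ) else 0) ∂μ
        = ∫ ω, (1:ℝ) * (∏ j, if Function.update b i T j < τ j ω then (1:ℝ) else 0) ∂μ := by
      refine integral_congr_ae (Filter.Eventually.of_forall fun ω => ?_)
      simp only []
      rw [one_mul, hcollapse b i T ((hbt i).trans htT) ω]
    have hL2 := key (Function.update b i T) (hupd_nonneg b hb0 i T hTnn) (fun _ => 1)
      stronglyMeasurable_const (fun ω => by norm_num)
    have hR2 := key (Function.update b i t) (hupd_nonneg b hb0 i t ht) Ysur hYsm hYbd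
    have hR1 : ∫ ω, (∏ j, if b j < τ j ω then (1:ℝ) else 0) *
          ((if t < τ i ω then (1:ℝ) else 0) *
            Real.exp (-∫ s in Ioc t T, lam s (X s ω))) ∂μ
        = ∫ ω, Ysur ω * (∏ j, if Function.update b i t j < τ j ω then (1:ℝ) else 0) ∂μ := by
      refine integral_congr_ae ?_
      filter_upwards [hYae] with ω hω
      calc (∏ j, if b j < τ j ω then (1:ℝ) else 0) *
            ((if t < τ i ω then (1:ℝ) else 0) *
              Real.exp (-∫ s in Ioc t T, lam s (X s ω)))
          = ((∏ j, if b j < τ j ω then (1:ℝ) else 0) *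
              (if t < τ i ω then (1:ℝ) else 0)) *
              Real.exp (-∫ s in Ioc t T, lam s (X s ω)) := by ring
        _ = (∏ j, if Function.update b i t j < τ j ω then (1:ℝ) else 0) *
              Real.exp (-∫ s in Ioc t T, lam s (X s ω)) := by
            rw [hcollapse b i t (hbt i) ω]
        _ = Ysur ω * (∏ j, if Function.update b i t j < τ j ω then (1:ℝ) else 0) := by
            rw [← hω]
            ring
    have hcmp : ∫ ω, Ysur ω *
          (∏ j, Real.exp (-∫ s in Ioc (0:ℝ) (Function.update b i t j), lam s (X s ω))) ∂μ
        = ∫ ω, (1:ℝ) *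
          (∏ j, Real.exp (-∫ s in Ioc (0:ℝ) (Function.update b i T j), lam s (X s ω))) ∂μ := by
      refine integral_congr_ae ?_
      filter_upwards [hYae, hadd] with ω hω hA
      have e1 : (∏ j, Real.exp (-∫ s in Ioc (0:ℝ) (Function.update b i t j), lam s (X s ω)))
          = Real.exp (-∫ s in Ioc (0:ℝ) t, lam s (X s ω)) *
            ∏ j ∈ Finset.univ.erase i,
              Real.exp (-∫ s in Ioc (0:ℝ) (b j), lam s (X s ω)) := by
        rw [← Finset.mul_prod_erase Finset.univ
          (fun j => Real.exp (-∫ s in Ioc (0:ℝ) (Function.update b i t j), lam s (X s ω)))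
          (Finset.mem_univ i), Function.update_self]
        congr 1
        exact Finset.prod_congr rfl fun j hj => by
          rw [Function.update_of_ne (Finset.ne_of_mem_erase hj)]
      have e2 : (∏ j, Real.exp (-∫ s in Ioc (0:ℝ) (Function.update b i T j), lam s (X s ω)))
          = Real.exp (-∫ s in Ioc (0:ℝ) T, lam s (X s ω)) *
            ∏ j ∈ Finset.univ.erase i,
              Real.exp (-∫ s in Ioc (0:ℝ) (b j), lam s (X s ω)) := by
        rw [← Finset.mul_prod_erase Finset.univ
          (fun j => Real.exp (-∫ s in Ioc (0:ℝ) (Function.update b i T j), lam s (X s ω)))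
          (Finset.mem_univ i), Function.update_self]
        congr 1
        exact Finset.prod_congr rfl fun j hj => by
          rw [Function.update_of_ne (Finset.ne_of_mem_erase hj)]
      rw [e1, e2, one_mul, ← hω, ← mul_assoc, ← Real.exp_add, hA]
      ring_nf
    calc ∫ ω, (∏ j, if b j < τ j ω then (1:ℝ) else 0) *
          (if T < τ i ω then (1:ℝ) else 0) ∂μ
        = ∫ ω, (1:ℝ) * (∏ j, if Function.update b i T j < τ j ω then (1:ℝ) else 0) ∂μ := hL1
      _ = ∫ ω, (1:ℝ) *
            (∏ j, Real.exp (-∫ s in Ioc (0:ℝ) (Function.update b i T j), lam s (X s ω))) ∂μ :=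
          hL2
      _ = ∫ ω, Ysur ω *
            (∏ j, Real.exp (-∫ s in Ioc (0:ℝ) (Function.update b i t j), lam s (X s ω))) ∂μ :=
          hcmp.symm
      _ = ∫ ω, Ysur ω * (∏ j, if Function.update b i t j < τ j ω then (1:ℝ) else 0) ∂μ :=
          hR2.symm
      _ = ∫ ω, (∏ j, if b j < τ j ω then (1:ℝ) else 0) *
            ((if t < τ i ω then (1:ℝ) else 0) *
              Real.exp (-∫ s in Ioc t T, lam s (X s ω))) ∂μ := hR1.symm
  -- sum identities
  have hNT_sum : ∀ (r : ℝ) (ω : Ω),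
      (la:ℝ) - N r ω = ∑ i, if r < τ i ω then (1:ℝ) else 0 := by
    intro r ω
    rw [hN r ω]
    have h1 : ((la:ℝ)) = ∑ _i : Fin la, (1:ℝ) := by simp
    rw [h1, ← Finset.sum_sub_distrib]
    refine Finset.sum_congr rfl fun i _ => ?_
    by_cases h : τ i ω ≤ r
    · rw [if_pos h, if_neg (not_lt.2 h)]
      ring
    · rw [if_neg h, if_pos (not_le.1 h)]
      ring
  have hNbd : ∀ (r : ℝ) (ω : Ω), 0 ≤ N r ω ∧ N r ω ≤ (la:ℝ) := by
    intro r ω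
    rw [hN r ω]
    constructor
    · exact Finset.sum_nonneg fun i _ => by positivity
    · calc (∑ i, if τ i ω ≤ r then (1:ℝ) else 0) ≤ ∑ _i : Fin la, (1:ℝ) :=
          Finset.sum_le_sum fun i _ => by split <;> norm_num
        _ = (la:ℝ) := by simp
  have hf0int : Integrable (fun ω => (la:ℝ) - N T ω) μ := by
    refine bdd_int μ (measurable_const.sub (hNmeas T)).aestronglyMeasurable (la:ℝ)
      fun ω => abs_le.2 ⟨by linarith [(hNbd T ω).2], by linarith [(hNbd T ω).1]⟩
  have hg0m : Measurable (fun ω => ((la:ℝ) - N t ω)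
      * Real.exp (-∫ s in Ioc t T, lam s (X s ω))) :=
    (measurable_const.sub (hNmeas t)).mul (Real.measurable_exp.comp (hLm t T).neg)
  have hg0int : Integrable (fun ω => ((la:ℝ) - N t ω)
      * Real.exp (-∫ s in Ioc t T, lam s (X s ω))) μ := by
    refine bdd_int μ hg0m.aestronglyMeasurable (la:ℝ) fun ω => ?_
    rw [abs_mul]
    have h1 : |(la:ℝ) - N t ω| ≤ (la:ℝ) :=
      abs_le.2 ⟨by linarith [(hNbd t ω).2], by linarith [(hNbd t ω).1]⟩
    have h2 : |Real.exp (-∫ s in Ioc t T, lam s (X s ω))| ≤ 1 := by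
      rw [abs_of_pos (Real.exp_pos _)]
      exact Real.exp_le_one_iff.2 (neg_nonpos.2 (hLnn t T ω))
    calc |(la:ℝ) - N t ω| * |Real.exp (-∫ s in Ioc t T, lam s (X s ω))|
        ≤ (la:ℝ) * 1 := mul_le_mul h1 h2 (abs_nonneg _) (Nat.cast_nonneg la)
      _ = (la:ℝ) := mul_one _
  have hsum : ∀ (b : Fin la → ℝ), (∀ j, 0 ≤ b j) → (∀ j, b j ≤ t) →
      ∫ ω, (∏ j, if b j < τ j ω then (1:ℝ) else 0) * ((la:ℝ) - N T ω) ∂μ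
        = ∫ ω, (∏ j, if b j < τ j ω then (1:ℝ) else 0) *
            (((la:ℝ) - N t ω) * Real.exp (-∫ s in Ioc t T, lam s (X s ω))) ∂μ := by
    intro b hb0 hbt
    have hterm_int : ∀ i : Fin la, Integrable (fun ω =>
        (∏ j, if b j < τ j ω then (1:ℝ) else 0) * (if T < τ i ω then (1:ℝ) else 0)) μ := by
      intro i
      refine bdd_int μ ((hPm b).mul (Measurable.ite
        (measurableSet_lt measurable_const (hτ_meas i)) measurable_const
        measurable_const)).aestronglyMeasurable 1 fun ω => ?_
      rw [abs_mul]
      refine mul_le_one₀ (by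
        rw [abs_of_nonneg (hPbd b ω).1]; exact (hPbd b ω).2) (abs_nonneg _) ?_
      split <;> norm_num
    have hterm_int2 : ∀ i : Fin la, Integrable (fun ω =>
        (∏ j, if b j < τ j ω then (1:ℝ) else 0) * ((if t < τ i ω then (1:ℝ) else 0)
          * Real.exp (-∫ s in Ioc t T, lam s (X s ω)))) μ := by
      intro i
      refine bdd_int μ ((hPm b).mul ((Measurable.ite
        (measurableSet_lt measurable_const (hτ_meas i)) measurable_const
        measurable_const).mul (Real.measurable_exp.comp (hLm t T).neg))).aestronglyMeasurable
        1 fun ω => ?_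
      rw [abs_mul, abs_mul]
      refine mul_le_one₀ (by
        rw [abs_of_nonneg (hPbd b ω).1]; exact (hPbd b ω).2) (by positivity) ?_
      refine mul_le_one₀ (by split <;> norm_num) (abs_nonneg _) ?_
      rw [abs_of_pos (Real.exp_pos _)]
      exact Real.exp_le_one_iff.2 (neg_nonpos.2 (hLnn t T ω))
    calc ∫ ω, (∏ j, if b j < τ j ω then (1:ℝ) else 0) * ((la:ℝ) - N T ω) ∂μ
        = ∫ ω, ∑ i, (∏ j, if b j < τ j ω then (1:ℝ) else 0) *
            (if T < τ i ω then (1:ℝ) else 0) ∂μ := by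
          refine integral_congr_ae (Filter.Eventually.of_forall fun ω => ?_)
          simp only []
          rw [hNT_sum T ω, Finset.mul_sum]
      _ = ∑ i, ∫ ω, (∏ j, if b j < τ j ω then (1:ℝ) else 0) *
            (if T < τ i ω then (1:ℝ) else 0) ∂μ :=
          integral_finset_sum _ fun i _ => hterm_int i
      _ = ∑ i, ∫ ω, (∏ j, if b j < τ j ω then (1:ℝ) else 0) *
            ((if t < τ i ω then (1:ℝ) else 0) *
              Real.exp (-∫ s in Ioc t T, lam s (X s ω))) ∂μ :=
          Finset.sum_congr rfl fun i _ => core b hb0 hbt i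
      _ = ∫ ω, ∑ i, (∏ j, if b j < τ j ω then (1:ℝ) else 0) *
            ((if t < τ i ω then (1:ℝ) else 0) *
              Real.exp (-∫ s in Ioc t T, lam s (X s ω))) ∂μ :=
          (integral_finset_sum _ fun i _ => hterm_int2 i).symm
      _ = ∫ ω, (∏ j, if b j < τ j ω then (1:ℝ) else 0) *
            (((la:ℝ) - N t ω) * Real.exp (-∫ s in Ioc t T, lam s (X s ω))) ∂μ := by
          refine integral_congr_ae (Filter.Eventually.of_forall fun ω => ?_)
          simp only []
          rw [hNT_sum t ω, Finset.sum_mul, Finset.mul_sum]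
  -- the σ-algebra of individual information up to time t
  set c : Ω → (Fin la → ℝ) := fun ω j => if τ j ω ≤ t then τ j ω else t + 1 with hcdef
  have hc_meas : Measurable c := measurable_pi_lambda _ fun j =>
    Measurable.ite (measurableSet_le (hτ_meas j) measurable_const) (hτ_meas j)
      measurable_const
  have hDle : MeasurableSpace.comap c MeasurableSpace.pi ≤ m0 := hc_meas.comap_le
  have hGN_le_D : GN t ≤ MeasurableSpace.comap c MeasurableSpace.pi := by
    rw [hGN]
    refine iSup_le fun s => iSup_le fun hs0 => iSup_le fun hst => ?_
    have hfe : N s = (fun v : Fin la → ℝ => ∑ j, if v j ≤ s then (1:ℝ) else 0) ∘ c := by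
      funext ω
      rw [hN]
      simp only [Function.comp_apply]
      refine Finset.sum_congr rfl fun j _ => ?_
      rw [hcdef]
      simp only []
      by_cases h : τ j ω ≤ t
      · simp only [if_pos h]
      · have h1 : ¬ τ j ω ≤ s := fun hc => h (hc.trans hst)
        have h2 : ¬ t + 1 ≤ s := by
          push_neg
          linarith
        simp only [if_neg h, if_neg h1, if_neg h2]
    have hF : Measurable (fun v : Fin la → ℝ => ∑ j, if v j ≤ s then (1:ℝ) else 0) :=
      Finset.measurable_sum _ fun j _ => Measurable.ite
        (measurableSet_le (measurable_pi_apply j) measurable_const)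
        measurable_const measurable_const
    rw [hfe, ← MeasurableSpace.comap_comp]
    exact MeasurableSpace.comap_mono hF.comap_le
  -- generators
  have hCspan : IsCountablySpanning (range (Ioi : ℝ → Set ℝ)) := by
    refine ⟨fun n => Ioi (-(n:ℝ)), fun n => mem_range_self _, ?_⟩
    ext x
    simp only [mem_iUnion, mem_Ioi, mem_univ, iff_true]
    obtain ⟨n, hn⟩ := exists_nat_gt (-x)
    exact ⟨n, by linarith⟩
  have hgen : MeasurableSpace.generateFrom (range (Ioi : ℝ → Set ℝ))
      = (inferInstance : MeasurableSpace ℝ) := by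
    rw [BorelSpace.measurable_eq (α := ℝ), borel_eq_generateFrom_Ioi ℝ]
  have hpi_gen : MeasurableSpace.generateFrom
      (pi univ '' pi univ fun _ : Fin la => range (Ioi : ℝ → Set ℝ))
        = (MeasurableSpace.pi : MeasurableSpace (Fin la → ℝ)) :=
    generateFrom_eq_pi (fun _ => hgen) (fun _ => hCspan)
  have hSpi : IsPiSystem (pi univ '' pi univ fun _ : Fin la => range (Ioi : ℝ → Set ℝ)) := by
    refine IsPiSystem.pi fun _ => ?_
    rintro _ ⟨x, rfl⟩ _ ⟨y, rfl⟩ _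
    exact ⟨max x y, (Ioi_inter_Ioi).symm⟩
  have heq_D : MeasurableSpace.comap c MeasurableSpace.pi
      = MeasurableSpace.generateFrom
        (preimage c '' (pi univ '' pi univ fun _ : Fin la => range (Ioi : ℝ → Set ℝ))) := by
    rw [← hpi_gen, MeasurableSpace.comap_generateFrom]
  have hS'pi : IsPiSystem
      (preimage c '' (pi univ '' pi univ fun _ : Fin la => range (Ioi : ℝ → Set ℝ))) := by
    rintro _ ⟨B1, hB1, rfl⟩ _ ⟨B2, hB2, rfl⟩ hne
    refine ⟨B1 ∩ B2, hSpi B1 hB1 B2 hB2 ?_, by rw [preimage_inter]⟩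
    obtain ⟨x, hx⟩ := hne
    exact ⟨c x, hx.1, hx.2⟩
  -- total-mass identity
  have hCuniv : ∫ ω, ((la:ℝ) - N T ω) ∂μ
      = ∫ ω, ((la:ℝ) - N t ω) * Real.exp (-∫ s in Ioc t T, lam s (X s ω)) ∂μ := by
    have h := hsum (fun _ => 0) (fun _ => le_rfl) (fun _ => ht)
    have hP1 : ∀ ω : Ω, (∏ j, if (0:ℝ) < τ j ω then (1:ℝ) else 0) = 1 :=
      fun ω => Finset.prod_eq_one fun j _ => if_pos (hτ_pos j ω)
    calc ∫ ω, ((la:ℝ) - N T ω) ∂μ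
        = ∫ ω, (∏ j, if (0:ℝ) < τ j ω then (1:ℝ) else 0) * ((la:ℝ) - N T ω) ∂μ := by
          refine integral_congr_ae (Filter.Eventually.of_forall fun ω => ?_)
          simp only []
          rw [hP1 ω, one_mul]
      _ = ∫ ω, (∏ j, if (0:ℝ) < τ j ω then (1:ℝ) else 0) *
            (((la:ℝ) - N t ω) * Real.exp (-∫ s in Ioc t T, lam s (X s ω))) ∂μ := h
      _ = ∫ ω, ((la:ℝ) - N t ω) * Real.exp (-∫ s in Ioc t T, lam s (X s ω)) ∂μ := by
          refine integral_congr_ae (Filter.Eventually.of_forall fun ω => ?_)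
          simp only []
          rw [hP1 ω, one_mul]
  -- main identity on the comap σ-algebra
  have hmain : ∀ A : Set Ω, MeasurableSet[MeasurableSpace.comap c MeasurableSpace.pi] A →
      ∫ ω in A, ((la:ℝ) - N T ω) ∂μ
        = ∫ ω in A, ((la:ℝ) - N t ω) * Real.exp (-∫ s in Ioc t T, lam s (X s ω)) ∂μ := by
    have hind := @MeasurableSpace.induction_on_inter Ω
      (MeasurableSpace.comap c MeasurableSpace.pi)
      (fun A _ => ∫ ω in A, ((la:ℝ) - N T ω) ∂μ
        = ∫ ω in A, ((la:ℝ) - N t ω) * Real.exp (-∫ s in Ioc t T, lam s (X s ω)) ∂μ)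
      (preimage c '' (pi univ '' pi univ fun _ : Fin la => range (Ioi : ℝ → Set ℝ)))
      heq_D hS'pi
    refine fun A hA => hind ?_ ?_ ?_ ?_ A hA
    · simp
    · -- basic case
      rintro A' ⟨B, ⟨g, hg, rfl⟩, rfl⟩
      choose av hav using fun j => hg j (mem_univ j)
      by_cases hcase : ∀ j, av j < t + 1
      · set b : Fin la → ℝ := fun j => min (max (av j) 0) t with hbdef
        have hb0 : ∀ j, 0 ≤ b j := fun j => le_min (le_max_right _ _) ht
        have hbt : ∀ j, b j ≤ t := fun j => min_le_right _ _
        have hAset : c ⁻¹' (univ.pi g) = {ω | ∀ j, b j < τ j ω} := by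
          ext ω
          rw [mem_preimage, mem_univ_pi, mem_setOf_eq]
          refine forall_congr' fun j => ?_
          rw [← hav j, mem_Ioi, hcdef]
          simp only []
          have hbj : b j = min (max (av j) 0) t := rfl
          by_cases hτt : τ j ω ≤ t
          · rw [if_pos hτt]
            by_cases ha0 : av j ≤ 0
            · rw [hbj, max_eq_right ha0, min_eq_left ht]
              exact iff_of_true (lt_of_le_of_lt ha0 (hτ_pos j ω)) (hτ_pos j ω)
            · push_neg at ha0
              by_cases hat : av j ≤ t
              · rw [hbj, max_eq_left ha0.le, min_eq_left hat]
              · push_neg at hat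
                rw [hbj, max_eq_left ha0.le, min_eq_right hat.le]
                exact iff_of_false (not_lt.2 (hτt.trans hat.le)) (not_lt.2 hτt)
          · rw [if_neg hτt]
            push_neg at hτt
            exact iff_of_true (hcase j) (lt_of_le_of_lt (hbt j) hτt)
        have hms : MeasurableSet {ω | ∀ j, b j < τ j ω} := by
          have hiem : {ω | ∀ j, b j < τ j ω} = ⋂ j, {ω | b j < τ j ω} := by
            ext ω
            simp [mem_iInter]
          rw [hiem]
          exact MeasurableSet.iInter fun j =>
            measurableSet_lt measurable_const (hτ_meas j)
        have hindi : ∀ (h : Ω → ℝ) (ω : Ω),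
            indicator {ω | ∀ j, b j < τ j ω} h ω
              = (∏ j, if b j < τ j ω then (1:ℝ) else 0) * h ω := by
          intro h ω
          by_cases hω : ω ∈ {ω | ∀ j, b j < τ j ω}
          · rw [indicator_of_mem hω, Finset.prod_eq_one fun j _ => if_pos (hω j), one_mul]
          · rw [indicator_of_notMem hω]
            obtain ⟨j, hj⟩ := not_forall.1 hω
            rw [Finset.prod_eq_zero (Finset.mem_univ j)
              (if_neg hj : (if b j < τ j ω then (1:ℝ) else 0) = 0), zero_mul]
        rw [hAset, ← integral_indicator hms, ← integral_indicator hms]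
        calc ∫ ω, indicator {ω | ∀ j, b j < τ j ω} (fun ω => (la:ℝ) - N T ω) ω ∂μ
            = ∫ ω, (∏ j, if b j < τ j ω then (1:ℝ) else 0) * ((la:ℝ) - N T ω) ∂μ :=
              integral_congr_ae (Filter.Eventually.of_forall fun ω =>
                hindi (fun ω => (la:ℝ) - N T ω) ω)
          _ = ∫ ω, (∏ j, if b j < τ j ω then (1:ℝ) else 0) *
                (((la:ℝ) - N t ω) * Real.exp (-∫ s in Ioc t T, lam s (X s ω))) ∂μ :=
              hsum b hb0 hbt
          _ = ∫ ω, indicator {ω | ∀ j, b j < τ j ω}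
                (fun ω => ((la:ℝ) - N t ω) * Real.exp (-∫ s in Ioc t T, lam s (X s ω))) ω ∂μ :=
              (integral_congr_ae (Filter.Eventually.of_forall fun ω =>
                hindi (fun ω => ((la:ℝ) - N t ω)
                  * Real.exp (-∫ s in Ioc t T, lam s (X s ω))) ω)).symm
      · push_neg at hcase
        obtain ⟨j0, hj0⟩ := hcase
        have hAempty : c ⁻¹' (univ.pi g) = ∅ := by
          ext ω
          simp only [mem_preimage, mem_empty_iff_false, iff_false, mem_univ_pi]
          intro hcon
          have h1 := hcon j0
          rw [← hav j0, mem_Ioi, hcdef] at h1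
          simp only [] at h1
          have hle : (if τ j0 ω ≤ t then τ j0 ω else t + 1) ≤ t + 1 := by
            split_ifs with h
            · linarith
            · exact le_rfl
          linarith
        rw [hAempty]
        simp
    · -- complement case
      intro A' hA' hC'
      have hA'' : MeasurableSet A' := hDle _ hA'
      have h1 := integral_add_compl hA'' hf0int
      have h2 := integral_add_compl hA'' hg0int
      linarith
    · -- countable disjoint union
      intro F hdisj hFm hC
      have hFm' : ∀ n, MeasurableSet (F n) := fun n => hDle _ (hFm n)
      rw [integral_iUnion hFm' hdisj hf0int.integrableOn,
        integral_iUnion hFm' hdisj hg0int.integrableOn]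
      exact tsum_congr hC
  -- conclusion
  have hstar : ∀ A : Set Ω, MeasurableSet[GN t] A →
      ∫ ω in A, ((la:ℝ) - N T ω) ∂μ
        = ∫ ω in A, ((la:ℝ) - N t ω) * Real.exp (-∫ s in Ioc t T, lam s (X s ω)) ∂μ :=
    fun A hA => hmain A (hGN_le_D A hA)
  have h1 : μ[(fun ω => ((la:ℝ) - N t ω) * Real.exp (-∫ s in Ioc t T, lam s (X s ω))) | GN t]
      =ᵐ[μ] μ[(fun ω => (la:ℝ) - N T ω) | GN t] := by
    refine ae_eq_condExp_of_forall_setIntegral_eq hGNle hf0int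
      (fun s hs hμs => integrable_condExp.integrableOn) (fun s hs hμs => ?_)
      (StronglyMeasurable.aestronglyMeasurable stronglyMeasurable_condExp)
    rw [setIntegral_condExp hGNle hg0int hs]
    exact (hstar s hs).symm
  have hNt_sm : StronglyMeasurable[GN t] (fun ω => (la:ℝ) - N t ω) := by
    have hNle : MeasurableSpace.comap (N t) inferInstance ≤ GN t := by
      rw [hGN]
      exact le_iSup_of_le t (le_iSup_of_le ht (le_iSup_of_le le_rfl le_rfl))
    have hNtm : Measurable[GN t] (N t) := Measurable.of_comap_le hNle
    exact (measurable_const.sub hNtm).stronglyMeasurable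
  have hYsur_int : Integrable (fun ω' => Real.exp (-∫ s in Ioc t T, lam s (X s ω'))) μ := by
    refine bdd_int μ (Real.measurable_exp.comp (hLm t T).neg).aestronglyMeasurable 1
      fun ω => ?_
    rw [abs_of_pos (Real.exp_pos _)]
    exact Real.exp_le_one_iff.2 (neg_nonpos.2 (hLnn t T ω))
  have h2 : μ[(fun ω => ((la:ℝ) - N t ω) * Real.exp (-∫ s in Ioc t T, lam s (X s ω))) | GN t]
      =ᵐ[μ] (fun ω => (la:ℝ) - N t ω)
        * μ[(fun ω' => Real.exp (-∫ s in Ioc t T, lam s (X s ω'))) | GN t] :=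
    condExp_mul_of_stronglyMeasurable_left hNt_sm hg0int hYsur_int
  exact h1.symm.trans h2
end
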